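/- Suppose p_{ij} ≥ 1 - √((1-p_{ii})(1-p_{jj})) for all 1 ≤ i < j ≤ k, and α ∈ (0,1]^k with Σ α_i = 1. Then c* := max{ |c|_1 : c ∈ conv(A), c = t·α for some t ≥ 0 } equals 1/h where h := Σ_{i∈[k]} α_i/c(p_{ii}). -/

import Mathlib

open Finset

theorem stmt_8 (k : ℕ) (hk : 1 ≤ k) (p : Fin k → Fin k → ℝ)
    (hsym : ∀ i j, p i j = p j i) (hp : ∀ i j, p i j ∈ Set.Ioo (0 : ℝ) 1)
    (hthr : ∀ i j : Fin k, i < j →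
      1 - Real.sqrt ((1 - p i i) * (1 - p j j)) ≤ p i j)
    (α : Fin k → ℝ) (hα : ∀ i, α i ∈ Set.Ioc (0 : ℝ) 1) (hαsum : ∑ i, α i = 1)
    (A : Set (Fin k → ℝ))
    (hA : A = {c : Fin k → ℝ | (∀ i, 0 ≤ c i) ∧ ∀ I : Finset (Fin k), I.Nonempty →
        0 ≤ (∑ i ∈ I, c i) +
          (1 / 2) * ∑ i ∈ I, ∑ j ∈ I, c i * c j * Real.log (1 - p i j)}) :
    IsGreatest
      {x : ℝ | ∃ c ∈ convexHull ℝ A, (∃ t : ℝ, 0 ≤ t ∧ c = t • α) ∧ x = ∑ i, c i}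
      (1 / ∑ i, α i / (-2 / Real.log (1 - p i i))) := by
  have hNe : Nonempty (Fin k) := ⟨⟨0, hk⟩⟩
  have h1p : ∀ i j, 0 < 1 - p i j := fun i j => by have := (hp i j).2; linarith
  have h1p' : ∀ i j, 1 - p i j < 1 := fun i j => by have := (hp i j).1; linarith
  set b : Fin k → ℝ := fun i => -Real.log (1 - p i i) / 2 with hbdef
  have hℓneg : ∀ i, Real.log (1 - p i i) < 0 := fun i => Real.log_neg (h1p i i) (h1p' i i)
  have hbpos : ∀ i, 0 < b i := fun i => by have := hℓneg i; simp only [hbdef]; linarith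
  have hdiv : ∀ i, α i / (-2 / Real.log (1 - p i i)) = α i * b i := by
    intro i
    have hne := (hℓneg i).ne
    simp only [hbdef]
    field_simp
  set h := ∑ i, α i * b i with hhdef
  have hhpos : 0 < h := Finset.sum_pos (fun i _ => mul_pos (hα i).1 (hbpos i)) univ_nonempty
  have hgoalrw : (∑ i, α i / (-2 / Real.log (1 - p i i))) = h := by
    rw [hhdef]; exact Finset.sum_congr rfl fun i _ => hdiv i
  -- key log inequality
  have hlog : ∀ i j : Fin k, Real.log (1 - p i j) ≤ -(b i + b j) := by
    have key : ∀ i j : Fin k, i < j → Real.log (1 - p i j) ≤ -(b i + b j) := by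
      intro i j hij
      have h2 : 1 - p i j ≤ Real.sqrt ((1 - p i i) * (1 - p j j)) := by
        have := hthr i j hij; linarith
      have h3 := Real.log_le_log (h1p i j) h2
      rw [Real.log_sqrt (le_of_lt (mul_pos (h1p i i) (h1p j j))),
        Real.log_mul (h1p i i).ne' (h1p j j).ne'] at h3
      have : -(b i + b j) = (Real.log (1 - p i i) + Real.log (1 - p j j)) / 2 := by
        simp only [hbdef]; ring
      linarith
    intro i j
    rcases lt_trichotomy i j with hij | rfl | hij
    · exact key i j hij
    · have : -(b i + b i) = Real.log (1 - p i i) := by simp only [hbdef]; ring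
      rw [this]
    · have := key j i hij
      rw [hsym i j]
      have hbs : -(b i + b j) = -(b j + b i) := by ring
      linarith
  -- A is contained in a halfspace
  have hsub : A ⊆ {c : Fin k → ℝ | ∑ i, c i * b i ≤ 1} := by
    rw [hA]
    rintro c ⟨hc0, hcI⟩
    set S := ∑ i, c i with hS
    set L := ∑ i, c i * b i with hL
    have hSnn : 0 ≤ S := Finset.sum_nonneg fun i _ => hc0 i
    rcases eq_or_lt_of_le hSnn with hS0 | hSpos
    · have hz : ∀ i, c i = 0 := fun i =>
        (Finset.sum_eq_zero_iff_of_nonneg (fun i _ => hc0 i)).1 hS0.symm i (mem_univ i)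
      have : L = 0 := by
        rw [hL]; exact Finset.sum_eq_zero fun i _ => by rw [hz i]; ring
      simp only [Set.mem_setOf_eq, ← hL, this]
      norm_num
    · have huniv := hcI univ univ_nonempty
      have hQ1 : ∑ i, ∑ j, c i * c j * Real.log (1 - p i j)
          ≤ ∑ i, ∑ j, c i * c j * (-(b i + b j)) := by
        apply Finset.sum_le_sum; intro i _
        apply Finset.sum_le_sum; intro j _
        exact mul_le_mul_of_nonneg_left (hlog i j) (mul_nonneg (hc0 i) (hc0 j))
      have e : ∀ i, ∑ j, c i * c j * (-(b i + b j)) = -(c i * b i * S + c i * L) := by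
        intro i
        have h1 : c i * b i * S + c i * L = ∑ j, (c i * b i * c j + c i * (c j * b j)) := by
          rw [Finset.sum_add_distrib, ← Finset.mul_sum, ← Finset.mul_sum, hS, hL]
        rw [h1, ← Finset.sum_neg_distrib]
        exact Finset.sum_congr rfl fun j _ => by ring
      have hQ2 : ∑ i, ∑ j, c i * c j * (-(b i + b j)) = -(L * S + S * L) := by
        rw [Finset.sum_congr rfl fun i _ => e i, Finset.sum_neg_distrib,
          Finset.sum_add_distrib, ← Finset.sum_mul, ← Finset.sum_mul, ← hS, ← hL]
      have hQ : ∑ i, ∑ j, c i * c j * Real.log (1 - p i j) ≤ -(L * S + S * L) :=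
        hQ1.trans (le_of_eq hQ2)
      show L ≤ 1
      nlinarith [huniv, hQ, hSpos]
  have hconv : Convex ℝ {c : Fin k → ℝ | ∑ i, c i * b i ≤ 1} := by
    have hlin : IsLinearMap ℝ (fun c : Fin k → ℝ => ∑ i, c i * b i) := by
      constructor
      · intro x y; simp [add_mul, Finset.sum_add_distrib]
      · intro t x; simp [Finset.mul_sum, mul_assoc]
    exact convex_halfSpace_le hlin 1
  have hhull : convexHull ℝ A ⊆ {c : Fin k → ℝ | ∑ i, c i * b i ≤ 1} :=
    convexHull_min hsub hconv
  constructor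
  · -- membership
    refine ⟨(1 / h) • α, ?_, ⟨1 / h, (one_div_pos.2 hhpos).le, rfl⟩, ?_⟩
    · set v : Fin k → (Fin k → ℝ) := fun i j => if j = i then 1 / b i else 0 with hv
      have hvA : ∀ i, v i ∈ A := by
        intro i
        rw [hA]
        constructor
        · intro j; simp only [hv]; split
          · exact (div_pos one_pos (hbpos i)).le
          · exact le_rfl
        · intro I hI
          have e1 : ∑ j ∈ I, v i j = if i ∈ I then 1 / b i else 0 := by
            simp [hv, Finset.sum_ite_eq' I i (fun _ => 1 / b i)]
          have e2 : ∑ j ∈ I, ∑ j' ∈ I, v i j * v i j' * Real.log (1 - p j j')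
              = if i ∈ I then 1 / b i * (1 / b i) * Real.log (1 - p i i) else 0 := by
            simp [hv, ite_mul, mul_ite, Finset.sum_ite_eq', Finset.sum_ite_eq]
            intro hiI
            exact fun h => absurd h hiI
          rw [e1, e2]
          split
          · have hbne := (hbpos i).ne'
            have hℓb : Real.log (1 - p i i) = -(2 * b i) := by simp only [hbdef]; ring
            rw [hℓb]
            have hbne := (hbpos i).ne'
            rw [show (1:ℝ) / b i + 1 / 2 * (1 / b i * (1 / b i) * -(2 * b i)) = 0 by
              field_simp; ring]
          · norm_num
      have hcm := Finset.centerMass_mem_convexHull (t := Finset.univ)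
        (w := fun i => α i * b i) (z := v) (s := A)
        (fun i _ => le_of_lt (mul_pos (hα i).1 (hbpos i)))
        (by rw [← hhdef]; exact hhpos) (fun i _ => hvA i)
      have hceq : (1 / h) • α = Finset.univ.centerMass (fun i => α i * b i) v := by
        rw [Finset.centerMass]
        funext j
        simp only [Pi.smul_apply, smul_eq_mul, ← hhdef, hv]
        rw [Finset.sum_apply]
        have : ∑ i, ((α i * b i) • fun j => if j = i then 1 / b i else 0) j = α j := by
          simp only [Pi.smul_apply, smul_eq_mul, mul_ite, mul_zero]
          rw [Finset.sum_ite_eq Finset.univ j (fun i => α i * b i * (1 / b i))]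
          simp [mul_assoc, mul_inv_cancel₀ (hbpos j).ne', one_div]
        rw [this]
        rw [one_div]
      rw [hceq]
      exact hcm
    · rw [hgoalrw]
      simp only [Pi.smul_apply, smul_eq_mul]
      rw [← Finset.mul_sum, hαsum, mul_one]
  · -- upper bound
    rintro x ⟨c, hc, ⟨t, ht0, rfl⟩, rfl⟩
    rw [hgoalrw]
    have hle := hhull hc
    simp only [Set.mem_setOf_eq, Pi.smul_apply, smul_eq_mul, mul_assoc] at hle
    rw [← Finset.mul_sum, ← hhdef] at hle
    have hsum : ∑ i, t * α i = t := by rw [← Finset.mul_sum, hαsum, mul_one]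
    simp only [Pi.smul_apply, smul_eq_mul, hsum]
    rw [le_div_iff₀ hhpos]
    exact hle
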